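/- Let u_T : ℝⁿ → ℝ be Lipschitz with I_T(u_T) nonempty, and let u0 ∈ I_T(u_T). Then for any x0 ∈ ℝⁿ, the following are equivalent: (1) x0 ∈ X_T(u_T); (2) there exist b ∈ ℝⁿ and c ∈ ℝ such that u0(x0) = −⟨A⁻¹x0, x0⟩/(2T) + ⟨b, x0⟩ + c and u0(x) > −⟨A⁻¹x, x⟩/(2T) + ⟨b, x⟩ + c for all x ∈ ℝⁿ with x ≠ x0. -/

import Mathlib

open scoped RealInnerProductSpace
open Filter

noncomputable section

/-- `n`-dimensional Euclidean space. -/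
abbrev Euc (n : ℕ) := EuclideanSpace ℝ (Fin n)

/-- A real-valued function on `ℝⁿ` is Lipschitz (with some constant). -/
def IsLip {n : ℕ} (f : Euc n → ℝ) : Prop := ∃ K : NNReal, LipschitzWith K f

/-- The quadratic form `q ↦ ⟨M q, q⟩` associated to a matrix `M`. -/
def quadA {n : ℕ} (M : Matrix (Fin n) (Fin n) ℝ) (q : Euc n) : ℝ :=
  ⟪(Matrix.toEuclideanLin M) q, q⟫

/-- The forward Hopf–Lax operator for the quadratic Hamiltonian `H(p) = ⟨A p, p⟩/2`:
`(S_T^+ g)(x) = inf_y [g(y) + ⟨A⁻¹(x-y), x-y⟩/(2T)]`. -/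
def SplusQ {n : ℕ} (T : ℝ) (A : Matrix (Fin n) (Fin n) ℝ) (g : Euc n → ℝ) (x : Euc n) : ℝ :=
  ⨅ y : Euc n, (g y + quadA A⁻¹ (x - y) / (2 * T))

/-- The backward operator for the quadratic Hamiltonian:
`(S_T^- g)(x) = sup_y [g(y) - ⟨A⁻¹(y-x), y-x⟩/(2T)]`. -/
def SminusQ {n : ℕ} (T : ℝ) (A : Matrix (Fin n) (Fin n) ℝ) (g : Euc n → ℝ) (x : Euc n) : ℝ :=
  ⨆ y : Euc n, (g y - quadA A⁻¹ (y - x) / (2 * T))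

/-- The set `X_T(u_T) = { z - T·A∇u_T(z) : u_T differentiable at z }` for the quadratic
Hamiltonian `H(p) = ⟨A p, p⟩/2`. -/
def XTQ {n : ℕ} (T : ℝ) (A : Matrix (Fin n) (Fin n) ℝ) (uT : Euc n → ℝ) : Set (Euc n) :=
  {x | ∃ z : Euc n, DifferentiableAt ℝ uT z ∧
    x = z - T • (Matrix.toEuclideanLin A) (gradient uT z)}

section XTauxiliary
open Matrix Asymptotics
variable {n : ℕ}

lemma inner_toLin_pos {M : Matrix (Fin n) (Fin n) ℝ} (hM : M.PosDef) {x : Euc n} (hx : x ≠ 0) :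
    0 < ⟪(Matrix.toEuclideanLin M) x, x⟫ := by
  have h := hM.dotProduct_mulVec_pos (x := (WithLp.equiv 2 _ ) x) (fun h => hx (by ext i; exact congrFun h i))
  simpa [Matrix.toEuclideanLin_apply, inner, dotProduct, Matrix.mulVec, mul_comm] using h


lemma cont_quad (M : Matrix (Fin n) (Fin n) ℝ) :
    Continuous (fun x : Euc n => ⟪(Matrix.toEuclideanLin M) x, x⟫) := by
  have hc : Continuous (fun x : Euc n => (Matrix.toEuclideanLin M) x) :=
    (Matrix.toEuclideanLin M).continuous_of_finiteDimensional
  exact hc.inner continuous_id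

lemma quad_smul (M : Matrix (Fin n) (Fin n) ℝ) (c : ℝ) (x : Euc n) :
    ⟪(Matrix.toEuclideanLin M) (c • x), c • x⟫ = c^2 * ⟪(Matrix.toEuclideanLin M) x, x⟫ := by
  rw [_root_.map_smul, real_inner_smul_left, real_inner_smul_right]; ring


lemma coercive {M : Matrix (Fin n) (Fin n) ℝ} (hM : M.PosDef) (hn : 0 < n) :
    ∃ m : ℝ, 0 < m ∧ ∀ x : Euc n, m * ‖x‖^2 ≤ ⟪(Matrix.toEuclideanLin M) x, x⟫ := by
  have hS : IsCompact (Metric.sphere (0 : Euc n) 1) := isCompact_sphere 0 1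
  have hne : (Metric.sphere (0 : Euc n) 1).Nonempty := by
    refine ⟨EuclideanSpace.single ⟨0, hn⟩ 1, ?_⟩
    simp [EuclideanSpace.norm_single]
  obtain ⟨u, huS, hmin⟩ := hS.exists_isMinOn hne ((cont_quad M).continuousOn)
  have hu1 : ‖u‖ = 1 := by simpa using huS
  refine ⟨⟪(Matrix.toEuclideanLin M) u, u⟫, inner_toLin_pos hM (by intro h; rw [h] at hu1; simp at hu1), ?_⟩
  intro x
  rcases eq_or_ne x 0 with rfl | hx
  · simp
  · have hxn : ‖x‖ ≠ 0 := norm_ne_zero_iff.2 hx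
    set v : Euc n := ‖x‖⁻¹ • x with hv
    have hvS : v ∈ Metric.sphere (0 : Euc n) 1 := by
      simp [hv, norm_smul, abs_of_nonneg (inv_nonneg.2 (norm_nonneg x)), inv_mul_cancel₀ hxn]
    have h1 := hmin hvS
    have h2 : ⟪(Matrix.toEuclideanLin M) x, x⟫ = ‖x‖^2 * ⟪(Matrix.toEuclideanLin M) v, v⟫ := by
      rw [hv, quad_smul]
      field_simp
    rw [h2]
    have := mul_le_mul_of_nonneg_left h1 (sq_nonneg ‖x‖)
    nlinarith [sq_nonneg ‖x‖]


lemma quad_add {M : Matrix (Fin n) (Fin n) ℝ} (hM : M.IsHermitian) (x y : Euc n) :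
    ⟪(Matrix.toEuclideanLin M) (x + y), x + y⟫ =
      ⟪(Matrix.toEuclideanLin M) x, x⟫ + 2 * ⟪(Matrix.toEuclideanLin M) x, y⟫
        + ⟪(Matrix.toEuclideanLin M) y, y⟫ := by
  have hs := (Matrix.isHermitian_iff_isSymmetric.1 hM)
  rw [map_add, inner_add_left, inner_add_right, inner_add_right]
  have : ⟪(Matrix.toEuclideanLin M) y, x⟫ = ⟪(Matrix.toEuclideanLin M) x, y⟫ := by
    rw [hs y x, real_inner_comm]
  rw [this]; ring

lemma quadA_add {M : Matrix (Fin n) (Fin n) ℝ} (hM : M.IsHermitian) (x y : Euc n) :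
    quadA M (x + y) =
      quadA M x + 2 * ⟪(Matrix.toEuclideanLin M) x, y⟫ + quadA M y :=
  quad_add hM x y

lemma cont_quad' (M : Matrix (Fin n) (Fin n) ℝ) : Continuous (quadA M) := by
  have hc : Continuous (fun x : Euc n => (Matrix.toEuclideanLin M) x) :=
    (Matrix.toEuclideanLin M).continuous_of_finiteDimensional
  exact hc.inner continuous_id


lemma exists_minimizer {T : ℝ} (hT : 0 < T) {M : Matrix (Fin n) (Fin n) ℝ}
    (hM : M.PosDef) (hn : 0 < n) {u0 : Euc n → ℝ} {K : NNReal} (hL : LipschitzWith K u0) :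
    ∃ R : ℝ, 0 < R ∧ ∀ z : Euc n, ∃ y : Euc n, ‖y - z‖ ≤ R ∧
      ∀ w : Euc n, u0 y + quadA M (z - y) / (2*T) ≤ u0 w + quadA M (z - w) / (2*T) := by
  obtain ⟨m, hm, hco⟩ := coercive hM hn
  have hRpos : (0:ℝ) < 2*K*T/m + 1 := by positivity
  refine ⟨2*K*T/m + 1, hRpos, fun z => ?_⟩
  have hfc : Continuous (fun w => u0 w + quadA M (z - w) / (2*T)) :=
    hL.continuous.add (((cont_quad' M).comp (continuous_const.sub continuous_id)).div_const _)
  obtain ⟨y, hyB, hymin⟩ := (isCompact_closedBall z (2*K*T/m + 1)).exists_isMinOn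
    ⟨z, by simpa using hRpos.le⟩ hfc.continuousOn
  have hyz : ‖y - z‖ ≤ 2*K*T/m + 1 := by
    simpa [dist_eq_norm] using hyB
  refine ⟨y, hyz, fun w => ?_⟩
  by_cases hw : w ∈ Metric.closedBall z (2*K*T/m + 1)
  · exact hymin hw
  · have h1 : u0 y + quadA M (z - y) / (2*T) ≤ u0 z + quadA M (z - z) / (2*T) :=
      hymin (by simpa using hRpos.le)
    have hfz : u0 z + quadA M (z - z) / (2*T) = u0 z := by simp [quadA]
    have ht : 2*K*T/m + 1 < ‖w - z‖ := by
      simpa [dist_eq_norm, Metric.closedBall] using hw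
    have htpos : 0 < ‖w - z‖ := lt_trans hRpos ht
    have hu : u0 z - K * ‖w - z‖ ≤ u0 w := by
      have h2 := hL.dist_le_mul z w
      rw [Real.dist_eq, dist_eq_norm, norm_sub_rev] at h2
      linarith [(abs_le.1 h2).2]
    have hq : m * ‖w - z‖^2 ≤ quadA M (z - w) := by
      have := hco (z - w); rwa [norm_sub_rev] at this
    have hKt : (K:ℝ) * ‖w - z‖ < m * ‖w - z‖^2 / (2*T) := by
      rw [lt_div_iff₀ (by positivity)]
      have h4 : 2*(K:ℝ)*T < m * ‖w - z‖ := by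
        have h3 : 2*(K:ℝ)*T/m < ‖w - z‖ := by linarith
        rw [div_lt_iff₀ hm] at h3; linarith
      calc (K:ℝ) * ‖w - z‖ * (2*T) = (2*(K:ℝ)*T) * ‖w - z‖ := by ring
      _ < (m * ‖w - z‖) * ‖w - z‖ := mul_lt_mul_of_pos_right h4 htpos
      _ = m * ‖w - z‖^2 := by ring
    have h5 : m * ‖w - z‖^2 / (2*T) ≤ quadA M (z - w) / (2*T) := by gcongr
    have : u0 z < u0 w + quadA M (z - w) / (2*T) := by linarith
    linarith


lemma iInf_eq_of_min {T : ℝ} {M : Matrix (Fin n) (Fin n) ℝ} {u0 : Euc n → ℝ} {z y : Euc n}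
    (hmin : ∀ w : Euc n, u0 y + quadA M (z - y) / (2*T) ≤ u0 w + quadA M (z - w) / (2*T)) :
    ⨅ w : Euc n, (u0 w + quadA M (z - w) / (2*T)) = u0 y + quadA M (z - y) / (2*T) :=
  le_antisymm (ciInf_le ⟨_, Set.forall_mem_range.2 hmin⟩ y) (le_ciInf hmin)

def CM (M : Matrix (Fin n) (Fin n) ℝ) : ℝ :=
  ‖LinearMap.toContinuousLinearMap (Matrix.toEuclideanLin M)‖

lemma CM_nonneg (M : Matrix (Fin n) (Fin n) ℝ) : 0 ≤ CM M := norm_nonneg _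

lemma inner_toLin_bound (M : Matrix (Fin n) (Fin n) ℝ) (v w : Euc n) :
    |⟪(Matrix.toEuclideanLin M) v, w⟫| ≤ CM M * ‖v‖ * ‖w‖ := by
  calc |⟪(Matrix.toEuclideanLin M) v, w⟫| ≤ ‖(Matrix.toEuclideanLin M) v‖ * ‖w‖ :=
        abs_real_inner_le_norm _ _
  _ ≤ (CM M * ‖v‖) * ‖w‖ := by
      have h := (LinearMap.toContinuousLinearMap (Matrix.toEuclideanLin M)).le_opNorm v
      have : ‖(Matrix.toEuclideanLin M) v‖ ≤ CM M * ‖v‖ := h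
      exact mul_le_mul_of_nonneg_right this (norm_nonneg w)
  _ = CM M * ‖v‖ * ‖w‖ := by ring

lemma quad_bound (M : Matrix (Fin n) (Fin n) ℝ) (w : Euc n) :
    |quadA M w| ≤ CM M * ‖w‖^2 := by
  have := inner_toLin_bound M w w
  calc |quadA M w| = |⟪(Matrix.toEuclideanLin M) w, w⟫| := rfl
  _ ≤ CM M * ‖w‖ * ‖w‖ := this
  _ = CM M * ‖w‖^2 := by ring


lemma hasFDerivAt_quad {T : ℝ} (hT : 0 < T) {M : Matrix (Fin n) (Fin n) ℝ}
    (hM : M.IsHermitian) (y z : Euc n) (a : ℝ) :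
    HasFDerivAt (fun x : Euc n => a + quadA M (x - y) / (2*T))
      (InnerProductSpace.toDual ℝ (Euc n) ((1/T) • (Matrix.toEuclideanLin M) (z - y))) z := by
  rw [hasFDerivAt_iff_isLittleO_nhds_zero]
  have key : ∀ h : Euc n, (a + quadA M ((z + h) - y) / (2*T)) - (a + quadA M (z - y) / (2*T))
      - (InnerProductSpace.toDual ℝ (Euc n) ((1/T) • (Matrix.toEuclideanLin M) (z - y))) h
      = quadA M h / (2*T) := by
    intro h
    have hx : (z + h) - y = (z - y) + h := by abel
    have hexp := quad_add hM (z - y) h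
    rw [InnerProductSpace.toDual_apply_apply, real_inner_smul_left]
    simp only [quadA, hx, hexp]
    field_simp
    ring
  have heq : (fun h : Euc n => (a + quadA M ((z + h) - y) / (2*T)) - (a + quadA M (z - y) / (2*T))
      - (InnerProductSpace.toDual ℝ (Euc n) ((1/T) • (Matrix.toEuclideanLin M) (z - y))) h)
      = fun h => quadA M h / (2*T) := funext key
  rw [heq, isLittleO_iff]
  intro c hc
  have hev : ∀ᶠ h : Euc n in nhds 0, ‖h‖ < 2*T*c / (CM M + 1) := by
    have : Metric.ball (0 : Euc n) (2*T*c / (CM M + 1)) ∈ nhds (0 : Euc n) :=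
      Metric.ball_mem_nhds _ (div_pos (by positivity) (by linarith [CM_nonneg M]))
    filter_upwards [this] with h hh
    simpa [dist_eq_norm] using hh
  filter_upwards [hev] with h hh
  have hb := quad_bound M h
  have hCM := CM_nonneg M
  rw [Real.norm_eq_abs, abs_div, abs_of_pos (by positivity : (0:ℝ) < 2*T), div_le_iff₀ (by positivity)]
  have h2 : CM M * ‖h‖ ≤ 2*T*c := by
    rcases le_or_gt (CM M * ‖h‖) (2*T*c) with hle | hlt
    · exact hle
    · exfalso
      have hh2 : (CM M + 1) * ‖h‖ < 2*T*c := by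
        rw [← lt_div_iff₀' (by linarith [CM_nonneg M])]
        exact hh
      nlinarith [norm_nonneg h]
  calc |quadA M h| ≤ CM M * ‖h‖^2 := hb
  _ = (CM M * ‖h‖) * ‖h‖ := by ring
  _ ≤ (2*T*c) * ‖h‖ := mul_le_mul_of_nonneg_right h2 (norm_nonneg _)
  _ = c * ‖h‖ * (2*T) := by ring

lemma toLin_inv_cancel {A : Matrix (Fin n) (Fin n) ℝ} (hA : A.PosDef) (v : Euc n) :
    (Matrix.toEuclideanLin A) ((Matrix.toEuclideanLin A⁻¹) v) = v := by
  have hdet : IsUnit A.det := isUnit_iff_ne_zero.2 (ne_of_gt hA.det_pos)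
  have h : A * A⁻¹ = 1 := Matrix.mul_nonsing_inv A hdet
  have : (Matrix.toEuclideanLin A).comp (Matrix.toEuclideanLin A⁻¹) =
      Matrix.toEuclideanLin (A * A⁻¹) := by
    apply LinearMap.ext; intro x
    simp [Matrix.toEuclideanLin_apply, Matrix.mulVec_mulVec]
  have h2 := LinearMap.congr_fun this v
  simp only [LinearMap.comp_apply] at h2
  rw [h2, h]
  simp [Matrix.toEuclideanLin_apply]


lemma toLin_inv_cancel' {A : Matrix (Fin n) (Fin n) ℝ} (hA : A.PosDef) (v : Euc n) :
    (Matrix.toEuclideanLin A⁻¹) ((Matrix.toEuclideanLin A) v) = v := by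
  have hdet : IsUnit A.det := isUnit_iff_ne_zero.2 (ne_of_gt hA.det_pos)
  have h : A⁻¹ * A = 1 := Matrix.nonsing_inv_mul A hdet
  have h2 : (Matrix.toEuclideanLin A⁻¹) ((Matrix.toEuclideanLin A) v) =
      (Matrix.toEuclideanLin (A⁻¹ * A)) v := by
    simp [Matrix.toEuclideanLin_apply, Matrix.mulVec_mulVec]
  rw [h2, h]
  simp [Matrix.toEuclideanLin_apply]


lemma grad_eq_of_min {T : ℝ} (hT : 0 < T) {M : Matrix (Fin n) (Fin n) ℝ}
    (hM : M.IsHermitian) {u0 uT : Euc n → ℝ} {z y : Euc n}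
    (huTle : ∀ x : Euc n, uT x ≤ u0 y + quadA M (x - y) / (2*T))
    (heq : uT z = u0 y + quadA M (z - y) / (2*T))
    (hdiff : DifferentiableAt ℝ uT z) :
    gradient uT z = (1/T) • (Matrix.toEuclideanLin M) (z - y) := by
  set p := (1/T) • (Matrix.toEuclideanLin M) (z - y) with hp
  have hq : HasFDerivAt (fun x : Euc n => u0 y + quadA M (x - y) / (2*T))
      (InnerProductSpace.toDual ℝ (Euc n) p) z := hasFDerivAt_quad hT hM y z (u0 y)
  have hpsi : HasFDerivAt (fun x : Euc n => (u0 y + quadA M (x - y) / (2*T)) - uT x)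
      (InnerProductSpace.toDual ℝ (Euc n) p - fderiv ℝ uT z) z :=
    hq.sub hdiff.hasFDerivAt
  have hmin : IsLocalMin (fun x : Euc n => (u0 y + quadA M (x - y) / (2*T)) - uT x) z := by
    apply Filter.Eventually.of_forall
    intro x
    have h1 := huTle x
    have : (0:ℝ) ≤ (u0 y + quadA M (x - y) / (2*T)) - uT x := by linarith
    have hz : (u0 y + quadA M (z - y) / (2*T)) - uT z = 0 := by linarith [heq]
    simpa [hz] using this
  have hzero := hmin.hasFDerivAt_eq_zero hpsi
  have hfd : fderiv ℝ uT z = InnerProductSpace.toDual ℝ (Euc n) p :=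
    (sub_eq_zero.1 hzero).symm
  rw [gradient, hfd, LinearIsometryEquiv.symm_apply_apply]

lemma exists_eta {g : Euc n → ℝ} (hgc : Continuous g) {x0 : Euc n}
    (hgpos : ∀ y : Euc n, y ≠ x0 → 0 < g y) {S : Set (Euc n)} (hS : IsCompact S)
    {ε : ℝ} (hε : 0 < ε) :
    ∃ η : ℝ, 0 < η ∧ ∀ y ∈ S, g y < η → ‖y - x0‖ < ε := by
  set D : Set (Euc n) := S ∩ {y | ε ≤ ‖y - x0‖} with hD
  have hDclosed : IsClosed D :=
    (hS.isClosed.inter (isClosed_le continuous_const ((continuous_id.sub continuous_const).norm)))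
  have hDcompact : IsCompact D := hS.of_isClosed_subset hDclosed Set.inter_subset_left
  rcases D.eq_empty_or_nonempty with hDe | hDne
  · refine ⟨1, one_pos, fun y hy _ => ?_⟩
    by_contra hcon
    push_neg at hcon
    have hmem : y ∈ D := ⟨hy, hcon⟩
    rw [hDe] at hmem
    exact Set.notMem_empty y hmem
  · obtain ⟨y₁, hy₁D, hy₁min⟩ := hDcompact.exists_isMinOn hDne hgc.continuousOn
    have hy₁ne : y₁ ≠ x0 := by
      intro h
      have : ε ≤ ‖y₁ - x0‖ := hy₁D.2
      rw [h] at this; simp at this; linarith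
    refine ⟨g y₁, hgpos y₁ hy₁ne, fun y hyS hlt => ?_⟩
    by_contra hcon
    push_neg at hcon
    have hmem : y ∈ D := ⟨hyS, hcon⟩
    have := isMinOn_iff.1 hy₁min y hmem
    linarith

lemma quad_nonneg {M : Matrix (Fin n) (Fin n) ℝ} (hM : M.PosDef) (v : Euc n) :
    0 ≤ quadA M v := by
  rcases eq_or_ne v 0 with rfl | hv
  · simp [quadA]
  · exact (inner_toLin_pos hM hv).le


set_option maxHeartbeats 2000000 in
lemma hasGradientAt_of_strict {T : ℝ} (hT : 0 < T) {M : Matrix (Fin n) (Fin n) ℝ}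
    (hM : M.PosDef) (hn : 0 < n) {u0 uT : Euc n → ℝ} {K L : NNReal}
    (hL0 : LipschitzWith K u0) (hLT : LipschitzWith L uT)
    (huT : ∀ x : Euc n, uT x = ⨅ w : Euc n, (u0 w + quadA M (x - w) / (2*T)))
    {z x0 : Euc n}
    (hKeq : u0 x0 + quadA M (z - x0) / (2*T) = uT z)
    (hstrict : ∀ y : Euc n, y ≠ x0 → uT z < u0 y + quadA M (z - y) / (2*T)) :
    HasGradientAt uT ((1/T) • (Matrix.toEuclideanLin M) (z - x0)) z := by
  obtain ⟨R, hR, hmin⟩ := exists_minimizer hT hM hn hL0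
  have hCM := CM_nonneg M
  have huTle : ∀ x w : Euc n, uT x ≤ u0 w + quadA M (x - w) / (2*T) := by
    intro x w
    rw [huT x]
    obtain ⟨y, _, hy⟩ := hmin x
    exact ciInf_le ⟨_, Set.forall_mem_range.2 hy⟩ w
  -- the expansion identity
  have hexp : ∀ v w : Euc n, quadA M (v + w) / (2*T) =
      quadA M v / (2*T) + ⟪(Matrix.toEuclideanLin M) v, w⟫ / T + quadA M w / (2*T) := by
    intro v w
    rw [quadA_add hM.1 v w]
    field_simp
  -- inner product with p0
  have hip : ∀ w : Euc n, ⟪(1/T) • (Matrix.toEuclideanLin M) (z - x0), w⟫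
      = ⟪(Matrix.toEuclideanLin M) (z - x0), w⟫ / T := by
    intro w; rw [real_inner_smul_left]; ring
  -- upper bound, valid for all x'
  have hup : ∀ x' : Euc n,
      uT x' - uT z - ⟪(1/T) • (Matrix.toEuclideanLin M) (z - x0), x' - z⟫
        ≤ CM M * ‖x' - z‖^2 / (2*T) := by
    intro x'
    have h1 : uT x' ≤ u0 x0 + quadA M (x' - x0) / (2*T) := huTle x' x0
    have hxp : x' - x0 = (z - x0) + (x' - z) := by abel
    have e1 := hexp (z - x0) (x' - z)
    rw [← hxp] at e1
    have hq2 : quadA M (x' - z) / (2*T) ≤ CM M * ‖x' - z‖^2 / (2*T) := by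
      have := le_of_abs_le (quad_bound M (x' - z))
      gcongr
    rw [hip (x' - z)]
    linarith
  -- continuity of g
  set g : Euc n → ℝ := fun y => u0 y + quadA M (z - y) / (2*T) - uT z with hg
  have hgc : Continuous g := by
    exact (hL0.continuous.add
      (((cont_quad' M).comp (continuous_const.sub continuous_id)).div_const _)).sub
      continuous_const
  have hgpos : ∀ y : Euc n, y ≠ x0 → 0 < g y := fun y hy => by
    have := hstrict y hy; simp only [hg]; linarith
  -- main littleO estimate
  rw [hasGradientAt_iff_isLittleO, isLittleO_iff]
  intro c hc
  have hεpos : 0 < T * c / (CM M + 1) := by positivity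
  obtain ⟨η, hη, hηsep⟩ := exists_eta hgc hgpos (isCompact_closedBall z (R+1)) hεpos
  set C₂ : ℝ := (L : ℝ) + CM M * (1 + R) / T with hC₂
  have hC₂0 : 0 ≤ C₂ := by positivity
  have hδpos : 0 < min (min 1 (η / (C₂ + 1))) (2*T*c / (CM M + 1)) := by
    refine lt_min (lt_min one_pos (by positivity)) (by positivity)
  filter_upwards [Metric.ball_mem_nhds z hδpos] with x' hx'
  have hw : ‖x' - z‖ < min (min 1 (η / (C₂ + 1))) (2*T*c / (CM M + 1)) := by
    simpa [dist_eq_norm] using hx'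
  have hw1 : ‖x' - z‖ ≤ 1 := le_of_lt (lt_of_lt_of_le hw (le_trans (min_le_left _ _) (min_le_left _ _)))
  have hwη : ‖x' - z‖ < η / (C₂ + 1) := lt_of_lt_of_le hw (le_trans (min_le_left _ _) (min_le_right _ _))
  have hwc : ‖x' - z‖ < 2*T*c / (CM M + 1) := lt_of_lt_of_le hw (min_le_right _ _)
  have hw0 : 0 ≤ ‖x' - z‖ := norm_nonneg _
  obtain ⟨y', hy'R, hy'min⟩ := hmin x'
  have huTx' : uT x' = u0 y' + quadA M (x' - y') / (2*T) := by
    rw [huT x']; exact iInf_eq_of_min hy'min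
  -- expansion at y'
  have hxp' : x' - y' = (z - y') + (x' - z) := by abel
  have e2 := hexp (z - y') (x' - z)
  rw [← hxp'] at e2
  -- lower bound
  have hzy' : ‖z - y'‖ ≤ 1 + R := by
    have h1 : ‖z - y'‖ ≤ ‖z - x'‖ + ‖x' - y'‖ := norm_sub_le_norm_sub_add_norm_sub z x' y'
    have h2 : ‖z - x'‖ = ‖x' - z‖ := norm_sub_rev z x'
    have h3 : ‖x' - y'‖ = ‖y' - x'‖ := norm_sub_rev x' y'
    linarith [hy'R, hw1, h1, h2.le, h3.le]
  have hy'ball : y' ∈ Metric.closedBall z (R+1) := by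
    rw [Metric.mem_closedBall, dist_eq_norm, norm_sub_rev]
    linarith
  -- g y' ≤ C₂ ‖w‖
  have hgy' : g y' ≤ C₂ * ‖x' - z‖ := by
    have hA1 : |uT x' - uT z| ≤ (L : ℝ) * ‖x' - z‖ := by
      have := hLT.dist_le_mul x' z
      rwa [Real.dist_eq, dist_eq_norm] at this
    have hA2 : |⟪(Matrix.toEuclideanLin M) (z - y'), x' - z⟫| ≤ CM M * (1 + R) * ‖x' - z‖ := by
      refine le_trans (inner_toLin_bound M _ _) ?_
      have := mul_le_mul_of_nonneg_right hzy' hw0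
      nlinarith [CM_nonneg M]
    have hqn : 0 ≤ quadA M (x' - z) / (2*T) :=
      div_nonneg (quad_nonneg hM _) (by positivity)
    -- g y' = uT x' - uT z - ⟪B(z-y'),w⟫/T - quadA(x'-z)/(2T)
    have hgval : g y' = (uT x' - uT z)
        - ⟪(Matrix.toEuclideanLin M) (z - y'), x' - z⟫ / T - quadA M (x' - z) / (2*T) := by
      simp only [hg]
      rw [huTx', e2]
      ring
    rw [hgval, hC₂]
    have hb1 := (abs_le.1 hA1).2
    have hb2 := (abs_le.1 hA2).1
    have hb2'' : -(⟪(Matrix.toEuclideanLin M) (z - y'), x' - z⟫ / T)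
        ≤ CM M * (1 + R) / T * ‖x' - z‖ := by
      have h2 : -⟪(Matrix.toEuclideanLin M) (z - y'), x' - z⟫ ≤ CM M * (1 + R) * ‖x' - z‖ := by
        linarith
      calc -(⟪(Matrix.toEuclideanLin M) (z - y'), x' - z⟫ / T)
          = (-⟪(Matrix.toEuclideanLin M) (z - y'), x' - z⟫) / T := by ring
      _ ≤ (CM M * (1 + R) * ‖x' - z‖) / T := by gcongr
      _ = CM M * (1 + R) / T * ‖x' - z‖ := by ring
    have hring : ((L : ℝ) + CM M * (1 + R) / T) * ‖x' - z‖
        = (L : ℝ) * ‖x' - z‖ + CM M * (1 + R) / T * ‖x' - z‖ := by ring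
    linarith
  -- g y' < η, hence y' is close to x0
  have hgy'' : g y' < η := by
    have h6 := (lt_div_iff₀' (by linarith : (0:ℝ) < C₂ + 1)).1 hwη
    nlinarith
  have hy'x0 : ‖y' - x0‖ < T * c / (CM M + 1) := hηsep y' hy'ball hgy''
  -- lower bound
  have hlow : -(c * ‖x' - z‖)
      ≤ uT x' - uT z - ⟪(1/T) • (Matrix.toEuclideanLin M) (z - x0), x' - z⟫ := by
    have hA1' : uT z ≤ u0 y' + quadA M (z - y') / (2*T) := huTle z y'
    have hqn : 0 ≤ quadA M (x' - z) / (2*T) :=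
      div_nonneg (quad_nonneg hM _) (by positivity)
    have h1 : ⟪(Matrix.toEuclideanLin M) (z - y'), x' - z⟫ / T ≤ uT x' - uT z := by
      rw [huTx']
      linarith
    have hsub : ⟪(Matrix.toEuclideanLin M) (z - y'), x' - z⟫ / T
        - ⟪(Matrix.toEuclideanLin M) (z - x0), x' - z⟫ / T
        = ⟪(Matrix.toEuclideanLin M) (x0 - y'), x' - z⟫ / T := by
      rw [div_sub_div_same, ← inner_sub_left, ← map_sub]
      have hd : (z - y') - (z - x0) = x0 - y' := by abel
      rw [hd]
    have habs := inner_toLin_bound M (x0 - y') (x' - z)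
    have h2 : ‖x0 - y'‖ < T * c / (CM M + 1) := by rwa [norm_sub_rev]
    have h3 : CM M * ‖x0 - y'‖ ≤ T * c := by
      have h4 : CM M * ‖x0 - y'‖ ≤ CM M * (T * c / (CM M + 1)) :=
        mul_le_mul_of_nonneg_left h2.le hCM
      have h5 : CM M * (T * c / (CM M + 1)) ≤ T * c := by
        have he : CM M * (T * c / (CM M + 1)) = (CM M / (CM M + 1)) * (T * c) := by ring
        rw [he]
        refine mul_le_of_le_one_left (by positivity) ?_
        exact div_le_one_of_le₀ (by linarith) (by linarith)
      linarith
    have hbound : CM M * ‖x0 - y'‖ * ‖x' - z‖ / T ≤ c * ‖x' - z‖ := by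
      rw [div_le_iff₀ hT]
      nlinarith [mul_le_mul_of_nonneg_right h3 hw0]
    have h7 : -(CM M * ‖x0 - y'‖ * ‖x' - z‖) / T
        ≤ ⟪(Matrix.toEuclideanLin M) (x0 - y'), x' - z⟫ / T := by
      have := (abs_le.1 habs).1
      gcongr
    rw [hip (x' - z)]
    have h8 : -(CM M * ‖x0 - y'‖ * ‖x' - z‖) / T
        = -(CM M * ‖x0 - y'‖ * ‖x' - z‖ / T) := by ring
    linarith [h1, hsub, h7, hbound]
  -- upper bound concretely
  have hupc : CM M * ‖x' - z‖^2 / (2*T) ≤ c * ‖x' - z‖ := by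
    have h5 : CM M * ‖x' - z‖ ≤ 2 * T * c := by
      have h4 : CM M * ‖x' - z‖ ≤ CM M * (2 * T * c / (CM M + 1)) :=
        mul_le_mul_of_nonneg_left hwc.le hCM
      have h6 : CM M * (2 * T * c / (CM M + 1)) ≤ 2 * T * c := by
        have he : CM M * (2 * T * c / (CM M + 1)) = (CM M / (CM M + 1)) * (2 * T * c) := by ring
        rw [he]
        refine mul_le_of_le_one_left (by positivity) ?_
        exact div_le_one_of_le₀ (by linarith) (by linarith)
      linarith
    rw [div_le_iff₀ (by positivity : (0:ℝ) < 2*T)]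
    nlinarith [mul_le_mul_of_nonneg_right h5 hw0]
  have hu := hup x'
  rw [Real.norm_eq_abs, abs_le]
  exact ⟨by linarith, by linarith⟩

lemma quad_sub {M : Matrix (Fin n) (Fin n) ℝ} (hM : M.IsHermitian) (z x : Euc n) :
    quadA M (z - x) = quadA M z - 2 * ⟪(Matrix.toEuclideanLin M) z, x⟫ + quadA M x := by
  have h := quad_add hM z (-x)
  have h1 : z + -x = z - x := by abel
  rw [h1] at h
  show (⟪(Matrix.toEuclideanLin M) (z-x), z-x⟫) = _
  rw [h]
  simp only [quadA, inner_neg_right, map_neg, inner_neg_left, neg_neg]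
  ring


lemma smul_cancel_T {T : ℝ} (hT : 0 < T) (v : Euc n) : T • ((1/T) • v) = v := by
  rw [smul_smul, mul_one_div_cancel (ne_of_gt hT), one_smul]


end XTauxiliary

/-- For `u0 ∈ I_T(u_T)`, a point `x0` belongs to `X_T(u_T)` iff there is a
paraboloid `x ↦ -⟨A⁻¹x, x⟩/(2T) + ⟨b, x⟩ + c` touching `u0` from below exactly at `x0`. -/
theorem XT_paraboloid_characterization
    {n : ℕ} (hn : 0 < n) (T : ℝ) (hT : 0 < T)
    (A : Matrix (Fin n) (Fin n) ℝ) (hA : A.PosDef)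
    (uT : Euc n → ℝ) (huT : IsLip uT)
    (hreach : ∃ u0 : Euc n → ℝ, IsLip u0 ∧ SplusQ T A u0 = uT)
    (u0 : Euc n → ℝ) (hu0 : IsLip u0) (hu0mem : SplusQ T A u0 = uT)
    (x0 : Euc n) :
    x0 ∈ XTQ T A uT ↔
      ∃ (b : Euc n) (c : ℝ),
        u0 x0 = -quadA A⁻¹ x0 / (2 * T) + ⟪b, x0⟫ + c ∧
        ∀ x : Euc n, x ≠ x0 → -quadA A⁻¹ x / (2 * T) + ⟪b, x⟫ + c < u0 x := by
  obtain ⟨K, hK⟩ := hu0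
  obtain ⟨LT, hLT⟩ := huT
  have hM : (A⁻¹).PosDef := hA.inv
  have hMH : (A⁻¹).IsHermitian := hM.1
  have huT' : ∀ x : Euc n, uT x = ⨅ w : Euc n, (u0 w + quadA A⁻¹ (x - w) / (2*T)) := by
    intro x; rw [← hu0mem]; rfl
  obtain ⟨R, hR, hmin⟩ := exists_minimizer hT hM hn hK
  have huTle : ∀ x w : Euc n, uT x ≤ u0 w + quadA A⁻¹ (x - w) / (2*T) := by
    intro x w
    rw [huT' x]
    obtain ⟨y, _, hy⟩ := hmin x
    exact ciInf_le ⟨_, Set.forall_mem_range.2 hy⟩ w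
  constructor
  · rintro ⟨z, hdiff, hx0⟩
    obtain ⟨y, hyR, hymin⟩ := hmin z
    have huTz : uT z = u0 y + quadA A⁻¹ (z - y) / (2*T) := by
      rw [huT' z]; exact iInf_eq_of_min hymin
    have hgrad : gradient uT z = (1/T) • (Matrix.toEuclideanLin A⁻¹) (z - y) :=
      grad_eq_of_min hT hMH (fun x => huTle x y) huTz hdiff
    have hx0y : x0 = y := by
      rw [hx0, hgrad, _root_.map_smul, toLin_inv_cancel hA, smul_cancel_T hT]
      abel
    refine ⟨(1/T) • (Matrix.toEuclideanLin A⁻¹) z, uT z - quadA A⁻¹ z / (2*T), ?_, ?_⟩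
    · -- equality at x0
      have hq := quad_sub hMH z x0
      have hbin : ⟪(1/T) • (Matrix.toEuclideanLin A⁻¹) z, x0⟫
          = (1/T) * ⟪(Matrix.toEuclideanLin A⁻¹) z, x0⟫ := real_inner_smul_left _ _ _
      have hux0 : u0 x0 = uT z - quadA A⁻¹ (z - x0) / (2*T) := by
        rw [hx0y]
        linarith [huTz]
      rw [hux0, hq, hbin]
      field_simp
      ring
    · intro x hx
      have hge := huTle z x
      have hne : uT z ≠ u0 x + quadA A⁻¹ (z - x) / (2*T) := by
        intro heq
        have hgrad2 : gradient uT z = (1/T) • (Matrix.toEuclideanLin A⁻¹) (z - x) :=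
          grad_eq_of_min hT hMH (fun x' => huTle x' x) heq hdiff
        have h2 := hgrad.symm.trans hgrad2
        have h1 : (Matrix.toEuclideanLin A⁻¹) (z - y) = (Matrix.toEuclideanLin A⁻¹) (z - x) := by
          calc (Matrix.toEuclideanLin A⁻¹) (z - y)
              = T • ((1/T) • (Matrix.toEuclideanLin A⁻¹) (z - y)) := (smul_cancel_T hT _).symm
          _ = T • ((1/T) • (Matrix.toEuclideanLin A⁻¹) (z - x)) := by rw [h2]
          _ = (Matrix.toEuclideanLin A⁻¹) (z - x) := smul_cancel_T hT _
        have h3 : z - y = z - x := by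
          have h4 := congrArg (Matrix.toEuclideanLin A) h1
          rwa [toLin_inv_cancel hA, toLin_inv_cancel hA] at h4
        exact hx (by rw [hx0y]; exact (sub_right_inj.1 h3).symm)
      have hlt : uT z < u0 x + quadA A⁻¹ (z - x) / (2*T) := lt_of_le_of_ne hge hne
      have hq := quad_sub hMH z x
      have hbin : ⟪(1/T) • (Matrix.toEuclideanLin A⁻¹) z, x⟫
          = (1/T) * ⟪(Matrix.toEuclideanLin A⁻¹) z, x⟫ := real_inner_smul_left _ _ _
      rw [hbin]
      have hgoal : -quadA A⁻¹ x / (2*T) + (1/T) * ⟪(Matrix.toEuclideanLin A⁻¹) z, x⟫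
          + (uT z - quadA A⁻¹ z / (2*T)) = uT z - quadA A⁻¹ (z - x) / (2*T) := by
        rw [hq]; field_simp; ring
      rw [hgoal]
      linarith
  · rintro ⟨b, c, hb0, hblt⟩
    set z : Euc n := T • (Matrix.toEuclideanLin A) b with hz
    have hBz : (Matrix.toEuclideanLin A⁻¹) z = T • b := by
      rw [hz, _root_.map_smul, toLin_inv_cancel' hA]
    have hpara : ∀ x : Euc n, -quadA A⁻¹ x / (2*T) + ⟪b, x⟫ + c
        = (c + quadA A⁻¹ z / (2*T)) - quadA A⁻¹ (z - x) / (2*T) := by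
      intro x
      have hq := quad_sub hMH z x
      have hbin : ⟪(Matrix.toEuclideanLin A⁻¹) z, x⟫ = T * ⟪b, x⟫ := by
        rw [hBz, real_inner_smul_left]
      rw [hq, hbin]
      field_simp
      ring
    have hKeq : u0 x0 + quadA A⁻¹ (z - x0) / (2*T) = c + quadA A⁻¹ z / (2*T) := by
      have := hpara x0
      rw [← hb0] at this
      linarith
    have huTz : uT z = c + quadA A⁻¹ z / (2*T) := by
      rw [huT' z]
      apply le_antisymm
      · exact le_of_le_of_eq (ciInf_le ⟨c + quadA A⁻¹ z / (2*T), by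
          rintro v ⟨y, rfl⟩
          rcases eq_or_ne y x0 with rfl | hy
          · exact hKeq.ge
          · have := hblt y hy
            rw [hpara y] at this
            linarith⟩ x0) hKeq
      · apply le_ciInf
        intro y
        rcases eq_or_ne y x0 with rfl | hy
        · exact hKeq.ge
        · have := hblt y hy
          rw [hpara y] at this
          linarith
    have hstrict : ∀ y : Euc n, y ≠ x0 → uT z < u0 y + quadA A⁻¹ (z - y) / (2*T) := by
      intro y hy
      have := hblt y hy
      rw [hpara y] at this
      linarith [huTz]
    have hgrad := hasGradientAt_of_strict hT hM hn hK hLT huT'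
      (by rw [huTz]; exact hKeq) hstrict
    refine ⟨z, hgrad.hasFDerivAt.differentiableAt, ?_⟩
    rw [hgrad.gradient, _root_.map_smul, toLin_inv_cancel hA, smul_cancel_T hT]
    abel
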